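/- Let 0 < α ≤ 1 and let k be a positive integer. Let G = (V,E) be a graph such that every vertex subset U ⊆ V with |U| = k satisfies |N_G(U)| ≥ αk. Then there is a vertex subset Z ⊂ V of size |Z| < k such that the induced subgraph G' = G[V∖Z] is an (αk/3, α/3)-expander. -/
import Mathlib


open scoped Classical

/-- The external neighborhood of a vertex set `U` in a simple graph `G`:
all vertices outside `U` having a neighbor in `U`. -/
def SimpleGraph.extNb {V : Type*} (G : SimpleGraph V) (U : Set V) : Set V :=
  {v | v ∉ U ∧ ∃ u ∈ U, G.Adj u v}

/-- A graph `G` on `n` vertices is an `α`-expander if every vertex subset `U` with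
`|U| ≤ n/2` satisfies `|N_G(U)| ≥ α |U|`. -/
def SimpleGraph.IsExpander {V : Type*} [Fintype V] (G : SimpleGraph V) (α : ℝ) : Prop :=
  ∀ U : Set V, (U.ncard : ℝ) ≤ (Fintype.card V : ℝ) / 2 →
    α * U.ncard ≤ ((G.extNb U).ncard : ℝ)

/-- `G` is a `(k, α)`-expander if every vertex subset `U` with `|U| ≤ k`
satisfies `|N_G(U)| ≥ α |U|`. -/
def SimpleGraph.IsKExpander {V : Type*} (G : SimpleGraph V) (k α : ℝ) : Prop :=
  ∀ U : Set V, (U.ncard : ℝ) ≤ k → α * U.ncard ≤ ((G.extNb U).ncard : ℝ)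

/-- Auxiliary extension lemma: if no small `Z` works, then any `W` with small
external neighborhood and `|W| < k` can be strictly enlarged keeping the
small-neighborhood property. -/
lemma extend_aux {V : Type*} [Fintype V] (G : SimpleGraph V) (α : ℝ)
    (hα0 : 0 < α) (k : ℕ)
    (H : ∀ Z : Set V, Z.ncard < k → ¬ (G.induce Zᶜ).IsKExpander (α * k / 3) (α / 3))
    (W : Set V) (hWk : W.ncard < k)
    (hNb : ((G.extNb W).ncard : ℝ) ≤ α / 3 * W.ncard) :
    ∃ W' : Set V, W.ncard < W'.ncard ∧ ((W'.ncard : ℝ) ≤ W.ncard + α * k / 3) ∧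
      ((G.extNb W').ncard : ℝ) ≤ α / 3 * W'.ncard := by
  have hne := H W hWk
  rw [SimpleGraph.IsKExpander] at hne
  push_neg at hne
  obtain ⟨U, hUle, hUnb⟩ := hne
  set U₀ : Set V := Subtype.val '' U with hU₀def
  have hU₀card : U₀.ncard = U.ncard := Set.ncard_image_of_injective _ Subtype.val_injective
  have hU₀sub : U₀ ⊆ Wᶜ := by rintro x ⟨y, hy, rfl⟩; exact y.2
  have hdisj : Disjoint W U₀ :=
    Set.disjoint_left.mpr (fun x hxW hxU => (hU₀sub hxU) hxW)
  have hUpos : 0 < U.ncard := by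
    rcases Nat.eq_zero_or_pos U.ncard with h0 | hp
    · exfalso
      have hge : (0:ℝ) ≤ (((G.induce Wᶜ).extNb U).ncard : ℝ) := Nat.cast_nonneg _
      rw [h0] at hUnb
      push_cast at hUnb
      linarith
    · exact hp
  refine ⟨W ∪ U₀, ?_, ?_, ?_⟩
  · rw [Set.ncard_union_eq hdisj, hU₀card]
    omega
  · rw [Set.ncard_union_eq hdisj, hU₀card]
    push_cast
    linarith
  · -- key inclusion
    have hincl : G.extNb (W ∪ U₀) ⊆
        G.extNb W ∪ (Subtype.val '' ((G.induce Wᶜ).extNb U)) := by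
      rintro v ⟨hvn, u, hu, hadj⟩
      have hvW : v ∉ W := fun hvW => hvn (Or.inl hvW)
      have hvU₀ : v ∉ U₀ := fun hvU => hvn (Or.inr hvU)
      rcases hu with huW | huU₀
      · exact Or.inl ⟨hvW, u, huW, hadj⟩
      · obtain ⟨u', hu'U, rfl⟩ := huU₀
        refine Or.inr ⟨⟨v, hvW⟩, ⟨?_, u', hu'U, ?_⟩, rfl⟩
        · intro hmem
          exact hvU₀ ⟨⟨v, hvW⟩, hmem, rfl⟩
        · exact hadj
    have h1 : (G.extNb (W ∪ U₀)).ncard ≤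
        (G.extNb W).ncard + ((G.induce Wᶜ).extNb U).ncard := by
      calc (G.extNb (W ∪ U₀)).ncard
          ≤ (G.extNb W ∪ (Subtype.val '' ((G.induce Wᶜ).extNb U))).ncard :=
            Set.ncard_le_ncard hincl (Set.toFinite _)
        _ ≤ (G.extNb W).ncard + (Subtype.val '' ((G.induce Wᶜ).extNb U)).ncard :=
            Set.ncard_union_le _ _
        _ = (G.extNb W).ncard + ((G.induce Wᶜ).extNb U).ncard := by
            rw [Set.ncard_image_of_injective _ Subtype.val_injective]
    have h1' : ((G.extNb (W ∪ U₀)).ncard : ℝ) ≤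
        ((G.extNb W).ncard : ℝ) + (((G.induce Wᶜ).extNb U).ncard : ℝ) := by
      exact_mod_cast h1
    rw [Set.ncard_union_eq hdisj, hU₀card]
    push_cast
    linarith

theorem stmt_2 {V : Type*} [Fintype V] (G : SimpleGraph V) (α : ℝ)
    (hα0 : 0 < α) (hα1 : α ≤ 1) (k : ℕ) (hk : 0 < k)
    (h : ∀ U : Set V, U.ncard = k → α * k ≤ ((G.extNb U).ncard : ℝ)) :
    ∃ Z : Set V, Z.ncard < k ∧
      (G.induce Zᶜ).IsKExpander (α * k / 3) (α / 3) := by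
  by_contra hcon
  push_neg at hcon
  have H : ∀ Z : Set V, Z.ncard < k → ¬ (G.induce Zᶜ).IsKExpander (α * k / 3) (α / 3) :=
    fun Z hZ hE => (hcon Z hZ) hE
  have hkR : (0 : ℝ) < k := by exact_mod_cast hk
  -- build larger and larger bad sets
  have key : ∀ j : ℕ, ∃ W : Set V, ((G.extNb W).ncard : ℝ) ≤ α / 3 * W.ncard ∧
      ((W.ncard : ℝ) < k + α * k / 3) ∧ (j ≤ W.ncard ∨ k ≤ W.ncard) := by
    intro j
    induction j with
    | zero =>
      refine ⟨∅, ?_, ?_, Or.inl (Nat.zero_le _)⟩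
      · simp [SimpleGraph.extNb]
      · simp; positivity
    | succ j ih =>
      obtain ⟨W, hW1, hW2, hW3⟩ := ih
      by_cases hWk : k ≤ W.ncard
      · exact ⟨W, hW1, hW2, Or.inr hWk⟩
      · push_neg at hWk
        obtain ⟨W', h1, h2, h3⟩ := extend_aux G α hα0 k H W hWk hW1
        refine ⟨W', h3, ?_, Or.inl ?_⟩
        · have : (W.ncard : ℝ) < k := by exact_mod_cast hWk
          linarith
        · rcases hW3 with hj | hj
          · omega
          · omega
  obtain ⟨W, hW1, hW2, hW3⟩ := key (2 * k)
  have hWk : k ≤ W.ncard := by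
    rcases hW3 with h2k | hle
    · -- impossible: 2k ≤ |W| < k + αk/3 ≤ 4k/3 < 2k
      exfalso
      have : ((2 * k : ℕ) : ℝ) ≤ (W.ncard : ℝ) := by exact_mod_cast h2k
      push_cast at this
      nlinarith
    · exact hle
  obtain ⟨W', hW'sub, hW'card⟩ := Set.exists_subset_card_eq hWk
  have hmain := h W' hW'card
  -- extNb W' ⊆ extNb W ∪ (W \ W')
  have hincl : G.extNb W' ⊆ G.extNb W ∪ (W \ W') := by
    rintro v ⟨hvn, u, hu, hadj⟩
    by_cases hvW : v ∈ W
    · exact Or.inr ⟨hvW, hvn⟩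
    · exact Or.inl ⟨hvW, u, hW'sub hu, hadj⟩
  have hcard : (G.extNb W').ncard ≤ (G.extNb W).ncard + (W \ W').ncard :=
    le_trans (Set.ncard_le_ncard hincl (Set.toFinite _)) (Set.ncard_union_le _ _)
  have hdiff : ((W \ W').ncard : ℝ) = (W.ncard : ℝ) - (W'.ncard : ℝ) :=
    Set.cast_ncard_sdiff hW'sub (Set.toFinite _)
  have hcard' : ((G.extNb W').ncard : ℝ) ≤ ((G.extNb W).ncard : ℝ) + ((W \ W').ncard : ℝ) := by
    exact_mod_cast hcard
  rw [hdiff, hW'card] at hcard'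
  -- now: αk ≤ (α/3)|W| + |W| - k, |W| < k + αk/3 : contradiction
  nlinarith [hW1, hW2, hmain, hcard', hkR, hα0, hα1]
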